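/- If A has spectral radius less than 1, then the unique solution P of the discrete Lyapunov equation A P Aᵀ − P + B Bᵀ = 0 is given by the convergent series P = Σ_{k=0}^∞ Aᵏ B Bᵀ (Aᵀ)ᵏ; in particular P is symmetric positive semidefinite. -/

import Mathlib

open Matrix Filter Topology
open scoped NNReal ENNReal

def SchurStable {n : ℕ} (A : Matrix (Fin n) (Fin n) ℝ) : Prop :=
  ∀ μ ∈ spectrum ℂ (A.map (Complex.ofReal)), ‖μ‖ < 1

section aux
attribute [local instance] Matrix.linftyOpNormedRing Matrix.linftyOpNormedAlgebra

lemma decayC {n : ℕ} (a : Matrix (Fin n) (Fin n) ℂ)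
    (h : ∀ μ ∈ spectrum ℂ a, ‖μ‖ < 1) :
    ∃ r : ℝ, 0 ≤ r ∧ r < 1 ∧ ∀ᶠ k in atTop, ‖a ^ k‖ ≤ r ^ k := by
  rcases Nat.eq_zero_or_pos n with hn | hn
  · subst hn
    refine ⟨1/2, by norm_num, by norm_num, Eventually.of_forall fun k => ?_⟩
    have h0 : a ^ k = 0 := Subsingleton.elim _ _
    rw [h0, norm_zero]
    positivity
  · have : NeZero n := ⟨hn.ne'⟩
    have hρ : spectralRadius ℂ a < ((1 : ℝ≥0) : ℝ≥0∞) := by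
      apply spectrum.spectralRadius_lt_of_forall_lt
      intro z hz
      have := h z hz
      simpa [← coe_nnnorm, ENNReal.coe_lt_coe] using this
    obtain ⟨r, hρr, hr1⟩ := ENNReal.lt_iff_exists_nnreal_btwn.mp hρ
    have hr1' : r < 1 := by exact_mod_cast hr1
    have htendsto := spectrum.pow_nnnorm_pow_one_div_tendsto_nhds_spectralRadius a
    have hev : ∀ᶠ k : ℕ in atTop, (‖a ^ k‖₊ : ℝ≥0∞) ^ (1 / (k:ℝ)) < (r : ℝ≥0∞) :=
      htendsto.eventually_lt_const hρr
    refine ⟨r, r.coe_nonneg, hr1', ?_⟩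
    filter_upwards [hev, eventually_ge_atTop 1] with k hk hk1
    have hk0 : (k : ℝ) ≠ 0 := by positivity
    have : ((‖a ^ k‖₊ : ℝ≥0∞) ^ (1 / (k:ℝ))) ^ (k : ℕ) ≤ ((r : ℝ≥0∞)) ^ (k : ℕ) :=
      pow_le_pow_left' hk.le k
    rw [← ENNReal.rpow_natCast ((‖a ^ k‖₊ : ℝ≥0∞) ^ (1 / (k:ℝ))), ← ENNReal.rpow_mul,
      one_div, inv_mul_cancel₀ hk0, ENNReal.rpow_one] at this
    have : (‖a ^ k‖₊ : ℝ≥0∞) ≤ ((r ^ k : ℝ≥0) : ℝ≥0∞) := by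
      simpa [ENNReal.coe_pow] using this
    have hnn : ‖a ^ k‖₊ ≤ r ^ k := by exact_mod_cast this
    calc ‖a ^ k‖ = (‖a ^ k‖₊ : ℝ) := rfl
    _ ≤ ((r ^ k : ℝ≥0) : ℝ) := by exact_mod_cast hnn
    _ = (r : ℝ) ^ k := by push_cast; ring

end aux

section aux2
attribute [local instance] Matrix.linftyOpNormedRing Matrix.linftyOpNormedAlgebra

lemma spectrum_transposeC {n : ℕ} (M : Matrix (Fin n) (Fin n) ℂ) :
    spectrum ℂ Mᵀ = spectrum ℂ M := by
  ext μ
  simp only [spectrum.mem_iff, not_iff_not, Matrix.isUnit_iff_isUnit_det]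
  have : algebraMap ℂ (Matrix (Fin n) (Fin n) ℂ) μ - Mᵀ
      = (algebraMap ℂ (Matrix (Fin n) (Fin n) ℂ) μ - M)ᵀ := by
    rw [Matrix.transpose_sub]
    congr 1
    rw [Matrix.algebraMap_eq_diagonal]
    simp
  rw [this, Matrix.det_transpose]

lemma norm_map_ofReal {n : ℕ} (A : Matrix (Fin n) (Fin n) ℝ) :
    ‖A.map (Complex.ofReal)‖ = ‖A‖ := by
  rw [Matrix.linfty_opNorm_def, Matrix.linfty_opNorm_def]
  congr 1
  apply Finset.sup_congr rfl
  intro i _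
  simp [Matrix.map_apply]

lemma decayR {n : ℕ} (A : Matrix (Fin n) (Fin n) ℝ) (hA : SchurStable A) :
    ∃ r : ℝ, 0 ≤ r ∧ r < 1 ∧ ∀ᶠ k in atTop, ‖A ^ k‖ ≤ r ^ k := by
  obtain ⟨r, hr0, hr1, hev⟩ := decayC (A.map Complex.ofReal) hA
  refine ⟨r, hr0, hr1, ?_⟩
  filter_upwards [hev] with k hk
  have hpow : (A.map Complex.ofReal) ^ k = (A ^ k).map Complex.ofReal := by
    have := map_pow (Complex.ofRealHom.mapMatrix (m := Fin n)) A k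
    exact this.symm
  rwa [hpow, norm_map_ofReal] at hk

lemma schurStable_transpose {n : ℕ} (A : Matrix (Fin n) (Fin n) ℝ) (hA : SchurStable A) :
    SchurStable Aᵀ := by
  intro μ hμ
  apply hA
  have : (Aᵀ).map Complex.ofReal = (A.map Complex.ofReal)ᵀ := rfl
  rw [this, spectrum_transposeC] at hμ
  exact hμ

end aux2

section aux3
attribute [local instance] Matrix.linftyOpNormedRing Matrix.linftyOpNormedAlgebra

lemma lyap_key {n m : ℕ} (A : Matrix (Fin n) (Fin n) ℝ) (B : Matrix (Fin n) (Fin m) ℝ)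
    (hA : SchurStable A) :
    ∃ S : Matrix (Fin n) (Fin n) ℝ,
      HasSum (fun k : ℕ => A ^ k * (B * Bᵀ) * Aᵀ ^ k) S ∧
      A * S * Aᵀ - S + B * Bᵀ = 0 ∧
      (∀ Q : Matrix (Fin n) (Fin n) ℝ, A * Q * Aᵀ - Q + B * Bᵀ = 0 → Q = S) := by
  obtain ⟨r₁, hr₁0, hr₁1, hev₁⟩ := decayR A hA
  obtain ⟨r₂, hr₂0, hr₂1, hev₂⟩ := decayR Aᵀ (schurStable_transpose A hA)
  set M : Matrix (Fin n) (Fin n) ℝ := B * Bᵀ with hM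
  set f : ℕ → Matrix (Fin n) (Fin n) ℝ := fun k => A ^ k * M * Aᵀ ^ k with hf
  -- tendsto facts
  have t₁ : Tendsto (fun k => ‖A ^ k‖) atTop (nhds 0) :=
    squeeze_zero' (Eventually.of_forall fun _ => norm_nonneg _) hev₁
      (tendsto_pow_atTop_nhds_zero_of_lt_one hr₁0 hr₁1)
  have t₂ : Tendsto (fun k => ‖Aᵀ ^ k‖) atTop (nhds 0) :=
    squeeze_zero' (Eventually.of_forall fun _ => norm_nonneg _) hev₂
      (tendsto_pow_atTop_nhds_zero_of_lt_one hr₂0 hr₂1)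
  -- summability
  have hr12 : r₁ * r₂ < 1 := by nlinarith
  have hgsum : Summable (fun k : ℕ => ‖M‖ * (r₁ * r₂) ^ k) :=
    (summable_geometric_of_lt_one (by positivity) hr12).mul_left _
  have hbound : ∀ᶠ k in atTop, ‖f k‖ ≤ ‖M‖ * (r₁ * r₂) ^ k := by
    filter_upwards [hev₁, hev₂] with k h1 h2
    calc ‖A ^ k * M * Aᵀ ^ k‖ ≤ ‖A ^ k * M‖ * ‖Aᵀ ^ k‖ := norm_mul_le _ _
    _ ≤ ‖A ^ k‖ * ‖M‖ * ‖Aᵀ ^ k‖ := by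
        apply mul_le_mul_of_nonneg_right (norm_mul_le _ _) (norm_nonneg _)
    _ ≤ r₁ ^ k * ‖M‖ * r₂ ^ k := by
        apply mul_le_mul (mul_le_mul_of_nonneg_right h1 (norm_nonneg _)) h2 (norm_nonneg _)
        positivity
    _ = ‖M‖ * (r₁ * r₂) ^ k := by rw [mul_pow]; ring
  have hsummable : Summable f :=
    Summable.of_norm_bounded_eventually_nat hgsum hbound
  set S := ∑' k, f k with hS
  have hsum : HasSum f S := hsummable.hasSum
  -- the shifted sum
  have step : ∀ (D : Matrix (Fin n) (Fin n) ℝ) (k : ℕ),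
      A * (A ^ k * D * Aᵀ ^ k) * Aᵀ = A ^ (k+1) * D * Aᵀ ^ (k+1) := by
    intro D k
    rw [pow_succ' A, pow_succ Aᵀ]
    simp only [Matrix.mul_assoc]
  have hsum₂ : HasSum (fun k => f (k + 1)) (A * S * Aᵀ) := by
    have h1 : HasSum (fun k => A * f k * Aᵀ) (A * S * Aᵀ) := (hsum.mul_left A).mul_right Aᵀ
    refine h1.congr_fun fun k => ?_
    rw [hf]
    exact (step M k).symm
  have hsum₃ : HasSum (fun k => f (k + 1)) (S - f 0) := by
    have h := (hasSum_nat_add_iff' (f := f) 1).mpr hsum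
    simpa using h
  have hASA : A * S * Aᵀ = S - M := by
    have hf0 : f 0 = M := by simp [hf]
    rw [← hf0]
    exact hsum₂.unique hsum₃
  have heq : A * S * Aᵀ - S + M = 0 := by rw [hASA]; abel
  refine ⟨S, hsum, heq, fun Q hQ => ?_⟩
  -- uniqueness
  set D := Q - S with hD
  have hQS : A * D * Aᵀ = D := by
    have hAQA : A * Q * Aᵀ = Q - M := by
      rw [← sub_eq_zero]
      calc A * Q * Aᵀ - (Q - M) = A * Q * Aᵀ - Q + M := by abel
      _ = 0 := hQ
    calc A * D * Aᵀ = A * Q * Aᵀ - A * S * Aᵀ := by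
          rw [hD, Matrix.mul_sub, Matrix.sub_mul]
    _ = (Q - M) - (S - M) := by rw [hAQA, hASA]
    _ = D := by rw [hD]; abel
  have iter : ∀ k : ℕ, D = A ^ k * D * Aᵀ ^ k := by
    intro k
    induction k with
    | zero => simp
    | succ k ih =>
      calc D = A * D * Aᵀ := hQS.symm
      _ = A * (A ^ k * D * Aᵀ ^ k) * Aᵀ := by rw [← ih]
      _ = A ^ (k+1) * D * Aᵀ ^ (k+1) := step D k
  have hDle : ∀ k : ℕ, ‖D‖ ≤ ‖A ^ k‖ * ‖D‖ * ‖Aᵀ ^ k‖ := by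
    intro k
    calc ‖D‖ = ‖A ^ k * D * Aᵀ ^ k‖ := by rw [← iter k]
    _ ≤ ‖A ^ k * D‖ * ‖Aᵀ ^ k‖ := norm_mul_le _ _
    _ ≤ ‖A ^ k‖ * ‖D‖ * ‖Aᵀ ^ k‖ :=
        mul_le_mul_of_nonneg_right (norm_mul_le _ _) (norm_nonneg _)
  have htend : Tendsto (fun k => ‖A ^ k‖ * ‖D‖ * ‖Aᵀ ^ k‖) atTop (nhds 0) := by
    have := (t₁.mul_const ‖D‖).mul t₂
    simpa using this
  have hD0 : ‖D‖ ≤ 0 := ge_of_tendsto htend (Eventually.of_forall hDle)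
  have : D = 0 := norm_le_zero_iff.mp hD0
  rw [hD] at this
  exact sub_eq_zero.mp this
end aux3

theorem lyapunov_solution_series {n m : ℕ}
    (A : Matrix (Fin n) (Fin n) ℝ) (B : Matrix (Fin n) (Fin m) ℝ)
    (hA : SchurStable A) :
    (∃! P : Matrix (Fin n) (Fin n) ℝ, A * P * Aᵀ - P + B * Bᵀ = 0) ∧
    (∀ P : Matrix (Fin n) (Fin n) ℝ, A * P * Aᵀ - P + B * Bᵀ = 0 →
      HasSum (fun k : ℕ => A ^ k * (B * Bᵀ) * Aᵀ ^ k) P ∧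
      P.IsSymm ∧ P.PosSemidef) := by
  obtain ⟨S, hsum, heq, huniq⟩ := lyap_key A B hA
  have hsum' : HasSum (fun k : ℕ => A ^ k * (B * Bᵀ) * Aᵀ ^ k) S := hsum
  -- symmetry of S
  have hsymm : Sᵀ = S := by
    apply huniq
    have := congrArg Matrix.transpose heq
    simpa [Matrix.transpose_add, Matrix.transpose_sub, Matrix.transpose_mul,
      Matrix.mul_assoc] using this
  constructor
  · exact ⟨S, heq, fun Q hQ => huniq Q hQ⟩
  · intro P hP
    have hPS : P = S := huniq P hP
    rw [hPS]
    refine ⟨hsum', hsymm, ?_⟩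
    -- positive semidefinite
    rw [Matrix.posSemidef_iff_dotProduct_mulVec]
    constructor
    · rw [Matrix.IsHermitian, Matrix.conjTranspose_eq_transpose_of_trivial]
      exact hsymm
    · intro x
      have hcont : Continuous (fun T : Matrix (Fin n) (Fin n) ℝ =>
          dotProduct x (T *ᵥ x)) := by
        simp only [dotProduct, Matrix.mulVec]
        apply continuous_finset_sum
        intro i _
        apply Continuous.mul continuous_const
        apply continuous_finset_sum
        intro j _
        exact ((Continuous.matrix_elem continuous_id i j).mul continuous_const)
      have hadd : ∀ T₁ T₂ : Matrix (Fin n) (Fin n) ℝ,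
          dotProduct x ((T₁ + T₂) *ᵥ x)
            = dotProduct x (T₁ *ᵥ x) + dotProduct x (T₂ *ᵥ x) := by
        intro T₁ T₂
        rw [Matrix.add_mulVec, dotProduct_add]
      set g : Matrix (Fin n) (Fin n) ℝ →+ ℝ :=
        AddMonoidHom.mk' (fun T => dotProduct x (T *ᵥ x)) hadd with hg
      have hq : HasSum (fun k : ℕ => g (A ^ k * (B * Bᵀ) * Aᵀ ^ k)) (g S) :=
        hsum'.map g hcont
      have hterm : ∀ k : ℕ, 0 ≤ g (A ^ k * (B * Bᵀ) * Aᵀ ^ k) := by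
        intro k
        have hfact : A ^ k * (B * Bᵀ) * Aᵀ ^ k = (A ^ k * B) * (A ^ k * B)ᴴ := by
          rw [Matrix.conjTranspose_eq_transpose_of_trivial, Matrix.transpose_mul,
            Matrix.transpose_pow]
          simp only [Matrix.mul_assoc]
        rw [hg]
        simp only [AddMonoidHom.mk'_apply]
        rw [hfact]
        have := (Matrix.posSemidef_self_mul_conjTranspose (A ^ k * B)).dotProduct_mulVec_nonneg x
        simpa using this
      have : (0:ℝ) ≤ g S := hasSum_le hterm hasSum_zero hq
      simpa [hg] using this
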